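/- Let T be a tree with at least 2 vertices, X ⊆ V(T), and k, r ≥ 1 integers with |X| ≥ kr. Then either there is a vertex v ∈ V(T) such that at least k components of T − v contain a vertex of X, or there is an edge f ∈ E(T) such that each of the two components of T − f contains at least r vertices of X. -/

import Mathlib

open Sym2

/-- A finite multigraph: finite vertex and edge types, each edge has an
unordered pair of endpoints, and there are no loops. -/
structure Multigraph where
  V : Type
  E : Type
  finV : Finite V
  finE : Finite E
  ends : E → Sym2 V
  no_loops : ∀ e, ¬ (ends e).IsDiag

attribute [instance] Multigraph.finV Multigraph.finE

namespace Multigraph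

/-- `IsWalk G vs es`: `vs` is the vertex sequence and `es` the edge sequence of a
walk in `G`. -/
inductive IsWalk (G : Multigraph) : List G.V → List G.E → Prop
  | nil (v : G.V) : IsWalk G [v] []
  | cons {v : G.V} {vs : List G.V} {es : List G.E} (u : G.V) (e : G.E)
      (he : G.ends e = s(u, v)) (hw : IsWalk G (v :: vs) es) :
      IsWalk G (u :: v :: vs) (e :: es)

/-- A path from `a` to `b` in the multigraph `G`, given by its vertex sequence `vs`
and edge sequence `es`. -/
def IsPathBetween (G : Multigraph) (a b : G.V) (vs : List G.V) (es : List G.E) : Prop :=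
  G.IsWalk vs es ∧ vs.Nodup ∧ vs.head? = some a ∧ vs.getLast? = some b

/-- A weak immersion of `H` into `G`. -/
structure WeakImmersion (H G : Multigraph) where
  vmap : H.V → G.V
  vmap_inj : Function.Injective vmap
  pverts : H.E → List G.V
  pedges : H.E → List G.E
  is_path : ∀ f : H.E, ∃ x y : H.V, H.ends f = s(x, y) ∧
    G.IsPathBetween (vmap x) (vmap y) (pverts f) (pedges f)
  edge_disjoint : ∀ f f' : H.E, f ≠ f' → ∀ e, e ∈ pedges f → e ∉ pedges f'

/-- `G.Immerses H`: `G` admits a weak immersion of `H`. -/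
def Immerses (G H : Multigraph) : Prop := Nonempty (WeakImmersion H G)

/-- The degree of a vertex: the number of edges incident with it. -/
noncomputable def degree (G : Multigraph) (v : G.V) : ℕ :=
  Nat.card {e : G.E // v ∈ G.ends e}

/-- The edge cut `δ(U)`: edges with exactly one endpoint in `U`. -/
def edgeCut (G : Multigraph) (U : Set G.V) : Set G.E :=
  {e | ∃ a b, G.ends e = s(a, b) ∧ a ∈ U ∧ b ∉ U}

/-- There exist `k` pairwise edge-disjoint paths from `a` to `b` in `G`. -/
def EdgeDisjointPaths (G : Multigraph) (a b : G.V) (k : ℕ) : Prop :=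
  ∃ (vs : Fin k → List G.V) (es : Fin k → List G.E),
    (∀ i, G.IsPathBetween a b (vs i) (es i)) ∧
    ∀ i j, i ≠ j → ∀ e, e ∈ es i → e ∉ es j

/-- Isomorphism of multigraphs. -/
structure Iso (G H : Multigraph) where
  vmap : G.V ≃ H.V
  emap : G.E ≃ H.E
  ends_map : ∀ e, H.ends (emap e) = Sym2.map vmap (G.ends e)

/-- The complete graph `K_t` as a multigraph. -/
def completeGraph (t : ℕ) : Multigraph where
  V := Fin t
  E := {p : Sym2 (Fin t) // ¬ p.IsDiag}
  finV := inferInstance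
  finE := inferInstance
  ends := Subtype.val
  no_loops := fun e => e.prop

/-- The multigraph `S_{k,n}`: vertices `x_1, …, x_n, y` (with `y = none`) and `k`
parallel edges from each `x_i` to `y`. -/
def star (k n : ℕ) : Multigraph where
  V := Option (Fin n)
  E := Fin n × Fin k
  finV := inferInstance
  finE := inferInstance
  ends := fun p => s(some p.1, none)
  no_loops := fun p => by simp [Sym2.mk_isDiag_iff]

/-! ### Edge sums -/

/-- A witness that `G` is a `k`-edge sum of `G₁` and `G₂`. -/
structure EdgeSumWitness (k : ℕ) (G G₁ G₂ : Multigraph) where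
  v₁ : G₁.V
  v₂ : G₂.V
  deg₁ : G₁.degree v₁ = k
  deg₂ : G₂.degree v₂ = k
  π : {e : G₁.E // v₁ ∈ G₁.ends e} ≃ {e : G₂.E // v₂ ∈ G₂.ends e}
  α : G.V ≃ {x : G₁.V // x ≠ v₁} ⊕ {y : G₂.V // y ≠ v₂}
  β : G.E ≃ ({e : G₁.E // v₁ ∉ G₁.ends e} ⊕ {e : G₂.E // v₂ ∉ G₂.ends e}) ⊕
      {e : G₁.E // v₁ ∈ G₁.ends e}
  ends₁ : ∀ (e : {e : G₁.E // v₁ ∉ G₁.ends e}) (x y : G₁.V) (hx : x ≠ v₁) (hy : y ≠ v₁),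
    G₁.ends e.val = s(x, y) →
      G.ends (β.symm (Sum.inl (Sum.inl e))) = s(α.symm (Sum.inl ⟨x, hx⟩), α.symm (Sum.inl ⟨y, hy⟩))
  ends₂ : ∀ (e : {e : G₂.E // v₂ ∉ G₂.ends e}) (x y : G₂.V) (hx : x ≠ v₂) (hy : y ≠ v₂),
    G₂.ends e.val = s(x, y) →
      G.ends (β.symm (Sum.inl (Sum.inr e))) = s(α.symm (Sum.inr ⟨x, hx⟩), α.symm (Sum.inr ⟨y, hy⟩))
  ends₃ : ∀ (e : {e : G₁.E // v₁ ∈ G₁.ends e}) (x : G₁.V) (y : G₂.V) (hx : x ≠ v₁) (hy : y ≠ v₂),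
    G₁.ends e.val = s(x, v₁) → G₂.ends (π e).val = s(y, v₂) →
      G.ends (β.symm (Sum.inr e)) = s(α.symm (Sum.inl ⟨x, hx⟩), α.symm (Sum.inr ⟨y, hy⟩))

/-- `G` is a `k`-edge sum of `G₁` and `G₂`. -/
def IsEdgeSum (k : ℕ) (G G₁ G₂ : Multigraph) : Prop :=
  Nonempty (EdgeSumWitness k G G₁ G₂)

/-- The edge sum is grounded. -/
def EdgeSumWitness.Grounded {k : ℕ} {G G₁ G₂ : Multigraph}
    (w : EdgeSumWitness k G G₁ G₂) : Prop :=
  (∃ v', v' ≠ w.v₁ ∧ G₁.EdgeDisjointPaths w.v₁ v' k) ∧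
  (∃ v', v' ≠ w.v₂ ∧ G₂.EdgeDisjointPaths w.v₂ v' k)

/-- `G` is a grounded `k`-edge sum of `G₁` and `G₂`. -/
def IsGroundedEdgeSum (k : ℕ) (G G₁ G₂ : Multigraph) : Prop :=
  ∃ w : EdgeSumWitness k G G₁ G₂, w.Grounded

/-! ### Auxiliary simple-graph operations -/

/-- Delete the vertex `t` from `T` (keeping it as an isolated vertex). -/
def delAt {τ : Type} (T : SimpleGraph τ) (t : τ) : SimpleGraph τ where
  Adj a b := T.Adj a b ∧ a ≠ t ∧ b ≠ t
  symm := ⟨fun a b h => ⟨h.1.symm, h.2.2, h.2.1⟩⟩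
  loopless := ⟨fun a h => T.irrefl h.1⟩

lemma reach_delAt {τ : Type} (T : SimpleGraph τ) (t : τ) {a b : τ} (q : T.Walk a b)
    (ht : t ∉ q.support) : (delAt T t).Reachable a b := by
  induction q with
  | nil => exact SimpleGraph.Reachable.refl _
  | @cons u v w h p ih =>
      simp only [SimpleGraph.Walk.support_cons, List.mem_cons] at ht
      push_neg at ht
      have hv : v ≠ t := fun hv => ht.2 (hv ▸ p.start_mem_support)
      exact (SimpleGraph.Adj.reachable (G := delAt T t) ⟨h, Ne.symm ht.1, hv⟩).trans (ih ht.2)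

/-! ### Tree-cut decompositions -/

/-- A tree-cut decomposition of the multigraph `G`. -/
structure TreeCutDecomp (G : Multigraph) where
  T : Type
  finT : Finite T
  tree : SimpleGraph T
  isTree : tree.IsTree
  bag : T → Set G.V
  disj : ∀ s t : T, s ≠ t → Disjoint (bag s) (bag t)
  covers : ∀ v : G.V, ∃ t : T, v ∈ bag t

attribute [instance] TreeCutDecomp.finT

variable {G : Multigraph}

/-- The union of the bags on the `v`-side of the tree edge `uv`. -/
def TreeCutDecomp.sideSet (D : TreeCutDecomp G) (u v : D.T) : Set G.V :=
  {x | ∃ s, (D.tree.deleteEdges {s(u, v)}).Reachable v s ∧ x ∈ D.bag s}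

/-- The adhesion of a tree-cut decomposition. -/
noncomputable def TreeCutDecomp.adhesion (D : TreeCutDecomp G) : ℕ :=
  sSup {n | ∃ u v : D.T, D.tree.Adj u v ∧ n = (G.edgeCut (D.sideSet u v)).ncard}

lemma TreeCutDecomp.exists_periph (D : TreeCutDecomp G) (t : D.T) (v : G.V)
    (hv : v ∉ D.bag t) :
    ∃ u : D.T, D.tree.Adj t u ∧ ∃ s, v ∈ D.bag s ∧ (delAt D.tree t).Reachable s u := by
  classical
  obtain ⟨s, hs⟩ := D.covers v
  have hst : t ≠ s := fun h => hv (h ▸ hs)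
  obtain ⟨w⟩ := D.isTree.isConnected.preconnected t s
  obtain ⟨x, hadj, q, hq⟩ := SimpleGraph.Walk.exists_eq_cons_of_ne hst w.toPath.val
  have hP : (SimpleGraph.Walk.cons hadj q).IsPath := hq ▸ w.toPath.prop
  rw [SimpleGraph.Walk.cons_isPath_iff] at hP
  exact ⟨x, hadj, s, hs, (reach_delAt D.tree t q hP.2).symm⟩

open Classical in
/-- The map from `G` to the vertices of the torso at `t`. -/
noncomputable def TreeCutDecomp.proj (D : TreeCutDecomp G) (t : D.T) (v : G.V) :
    ↥(D.bag t) ⊕ {u : D.T // D.tree.Adj t u} :=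
  if hv : v ∈ D.bag t then Sum.inl ⟨v, hv⟩
  else Sum.inr ⟨(D.exists_periph t v hv).choose, (D.exists_periph t v hv).choose_spec.1⟩

/-- The torso of `G` at a node `t` of a tree-cut decomposition. -/
noncomputable def TreeCutDecomp.torso (D : TreeCutDecomp G) (t : D.T) : Multigraph where
  V := ↥(D.bag t) ⊕ {u : D.T // D.tree.Adj t u}
  E := {e : G.E // ¬ (Sym2.map (D.proj t) (G.ends e)).IsDiag}
  finV := inferInstance
  finE := inferInstance
  ends := fun e => Sym2.map (D.proj t) (G.ends e.val)
  no_loops := fun e => e.prop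

/-- The core vertices of the torso at `t`. -/
def TreeCutDecomp.torsoCore (D : TreeCutDecomp G) (t : D.T) : Set (D.torso t).V :=
  Set.range Sum.inl

/-! ### The 3-center and tree-cut width -/

/-- Condition (1): the immersion of `H` in `G` covers `X` and every vertex of `H`
of degree at most two is mapped into `X`. -/
def CenterCond (G : Multigraph) (X : Set G.V) (H : Multigraph) (I : WeakImmersion H G) : Prop :=
  X ⊆ Set.range I.vmap ∧ ∀ x : H.V, H.degree x ≤ 2 → I.vmap x ∈ X

/-- `C` is a 3-center of `(G, X)`: it admits an immersion in `G` satisfying (1) and is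
maximal with respect to immersion containment among all such graphs. -/
def IsThreeCenter (G : Multigraph) (X : Set G.V) (C : Multigraph) : Prop :=
  (∃ I : WeakImmersion C G, CenterCond G X C I) ∧
  ∀ H : Multigraph, (∃ I : WeakImmersion H G, CenterCond G X H I) → C.Immerses H

/-- The number of vertices of the 3-center of `(G, X)`. -/
noncomputable def threeCenterCard (G : Multigraph) (X : Set G.V) : ℕ :=
  sSup {n | ∃ C : Multigraph, IsThreeCenter G X C ∧ Nat.card C.V = n}

/-- The width of a tree-cut decomposition. -/
noncomputable def TreeCutDecomp.width (D : TreeCutDecomp G) : ℕ :=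
  max D.adhesion (sSup {n | ∃ t : D.T, n = threeCenterCard (D.torso t) (D.torsoCore t)})

/-- The tree-cut width of a multigraph. -/
noncomputable def tcw (G : Multigraph) : ℕ :=
  sInf {w | ∃ D : TreeCutDecomp G, D.width = w}

/-! ### Tree decompositions and tree-width -/

/-- A tree decomposition of the multigraph `G`. -/
structure TreeDecomp (G : Multigraph) where
  T : Type
  finT : Finite T
  tree : SimpleGraph T
  isTree : tree.IsTree
  bag : T → Set G.V
  covers_v : ∀ v : G.V, ∃ t : T, v ∈ bag t
  covers_e : ∀ e : G.E, ∃ (t : T) (x y : G.V), G.ends e = s(x, y) ∧ x ∈ bag t ∧ y ∈ bag t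
  connected : ∀ v : G.V, (SimpleGraph.induce {t : T | v ∈ bag t} tree).Connected

/-- The tree-width of a multigraph. -/
noncomputable def treewidth (G : Multigraph) : ℕ :=
  sInf {n | ∃ D : TreeDecomp G, ∀ t : D.T, (D.bag t).ncard ≤ n + 1}

/-! ### Walls and grids -/

def wallStep (r : ℕ) (a b : Fin r × Fin r) : Prop :=
  (a.1 = b.1 ∧ a.2.val + 1 = b.2.val) ∨
  (a.2 = b.2 ∧ a.1.val + 1 = b.1.val ∧ (a.1.val + 1) % 2 = (a.2.val + 1) % 2)

def wallAdj (r : ℕ) (a b : Fin r × Fin r) : Prop := wallStep r a b ∨ wallStep r b a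

lemma wallStep_ne {r : ℕ} {a b : Fin r × Fin r} (h : wallStep r a b) : a ≠ b := by
  rintro rfl
  rcases h with ⟨-, h⟩ | ⟨-, h, -⟩ <;> omega

/-- The `r`-wall `H_r`. -/
def wall (r : ℕ) : Multigraph where
  V := Fin r × Fin r
  E := {q : Sym2 (Fin r × Fin r) // ∃ a b, q = s(a, b) ∧ wallAdj r a b}
  finV := inferInstance
  finE := inferInstance
  ends := Subtype.val
  no_loops := by
    rintro ⟨q, a, b, rfl, hab⟩ hd
    rw [Sym2.mk_isDiag_iff] at hd
    subst hd
    rcases hab with h | h <;> exact wallStep_ne h rfl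

def gridStep (r : ℕ) (a b : Fin r × Fin r) : Prop :=
  (a.1 = b.1 ∧ a.2.val + 1 = b.2.val) ∨ (a.2 = b.2 ∧ a.1.val + 1 = b.1.val)

def gridAdj (r : ℕ) (a b : Fin r × Fin r) : Prop := gridStep r a b ∨ gridStep r b a

lemma gridStep_ne {r : ℕ} {a b : Fin r × Fin r} (h : gridStep r a b) : a ≠ b := by
  rintro rfl
  rcases h with ⟨-, h⟩ | ⟨-, h⟩ <;> omega

/-- The `r × r` grid. -/
def grid (r : ℕ) : Multigraph where
  V := Fin r × Fin r
  E := {q : Sym2 (Fin r × Fin r) // ∃ a b, q = s(a, b) ∧ gridAdj r a b}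
  finV := inferInstance
  finE := inferInstance
  ends := Subtype.val
  no_loops := by
    rintro ⟨q, a, b, rfl, hab⟩ hd
    rw [Sym2.mk_isDiag_iff] at hd
    subst hd
    rcases hab with h | h <;> exact gridStep_ne h rfl

/-! ### Subdivisions and minors -/

/-- `G` contains `H` as a subdivision: an immersion whose composite paths pairwise
meet only in common endpoints. -/
def ContainsSubdivision (G H : Multigraph) : Prop :=
  ∃ I : WeakImmersion H G, ∀ f f' : H.E, f ≠ f' → ∀ v : G.V,
    v ∈ I.pverts f → v ∈ I.pverts f' →
      ((I.pverts f).head? = some v ∨ (I.pverts f).getLast? = some v) ∧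
      ((I.pverts f').head? = some v ∨ (I.pverts f').getLast? = some v)

/-- A set of vertices is connected in `G`. -/
def ConnectedIn (G : Multigraph) (B : Set G.V) : Prop :=
  B.Nonempty ∧ ∀ a ∈ B, ∀ b ∈ B, ∃ (vs : List G.V) (es : List G.E),
    G.IsWalk vs es ∧ vs.head? = some a ∧ vs.getLast? = some b ∧ ∀ v ∈ vs, v ∈ B

/-- `G` contains `H` as a minor. -/
def HasMinor (G H : Multigraph) : Prop :=
  ∃ B : H.V → Set G.V,
    (∀ x, G.ConnectedIn (B x)) ∧
    (∀ x y, x ≠ y → Disjoint (B x) (B y)) ∧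
    ∃ η : H.E → G.E, Function.Injective η ∧
      ∀ (f : H.E) (x y : H.V), H.ends f = s(x, y) →
        ∃ a b, G.ends (η f) = s(a, b) ∧ a ∈ B x ∧ b ∈ B y

/-! ### Subgraphs, splitting off, suppression -/

/-- `A` is (isomorphic to) a subgraph of `G`. -/
def IsSubgraph (A G : Multigraph) : Prop :=
  ∃ (fv : A.V → G.V) (fe : A.E → G.E), Function.Injective fv ∧ Function.Injective fe ∧
    ∀ e, G.ends (fe e) = Sym2.map fv (A.ends e)

/-- `B` is obtained from `A` by splitting off a pair of incident edges. -/
def SplitOffRel (A B : Multigraph) : Prop :=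
  ∃ (e₁ e₂ : A.E) (x y z : A.V), e₁ ≠ e₂ ∧ x ≠ z ∧
    A.ends e₁ = s(x, y) ∧ A.ends e₂ = s(y, z) ∧
    ∃ (fV : A.V ≃ B.V) (fE : {e : A.E // e ≠ e₁ ∧ e ≠ e₂} ⊕ Unit ≃ B.E),
      (∀ e : {e : A.E // e ≠ e₁ ∧ e ≠ e₂},
        B.ends (fE (Sum.inl e)) = Sym2.map fV (A.ends e.val)) ∧
      B.ends (fE (Sum.inr ())) = s(fV x, fV z)

/-- `B` is obtained from `A` by suppressing a vertex of degree two (contracting one of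
its incident edges and deleting any resulting loops). -/
def SuppressTwoRel (A B : Multigraph) : Prop :=
  ∃ v : A.V, A.degree v = 2 ∧
    ∃ σ : A.V → B.V,
      (∀ x y, x ≠ v → y ≠ v → (σ x = σ y ↔ x = y)) ∧
      (∀ y : B.V, ∃ x, x ≠ v ∧ σ x = y) ∧
      (∃ a, a ≠ v ∧ (∃ e, A.ends e = s(v, a)) ∧ σ v = σ a) ∧
      ∃ τ : {e : A.E // ¬ (Sym2.map σ (A.ends e)).IsDiag} ≃ B.E,
        ∀ e, B.ends (τ e) = Sym2.map σ (A.ends e.val)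

/-- A multigraph together with a marked set of vertices. -/
structure MarkedGraph where
  G : Multigraph
  X : Set G.V

/-- One step of suppressing a vertex outside the marked set of degree at most two
(for degree zero this deletes the vertex). -/
def SuppressStep (A B : MarkedGraph) : Prop :=
  ∃ v : A.G.V, v ∉ A.X ∧ A.G.degree v ≤ 2 ∧
    ∃ σ : A.G.V → B.G.V,
      (∀ x y, x ≠ v → y ≠ v → (σ x = σ y ↔ x = y)) ∧
      (∀ y : B.G.V, ∃ x, x ≠ v ∧ σ x = y) ∧
      B.X = {y | ∃ x, x ∈ A.X ∧ σ x = y} ∧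
      (1 ≤ A.G.degree v → ∃ a, a ≠ v ∧ (∃ e, A.G.ends e = s(v, a)) ∧ σ v = σ a) ∧
      ∃ τ : {e : A.G.E // ¬ (Sym2.map σ (A.G.ends e)).IsDiag} ≃ B.G.E,
        ∀ e, B.G.ends (τ e) = Sym2.map σ (A.G.ends e.val)

/-! ### Trees and cycles as multigraphs -/

/-- A multigraph is a tree if it corresponds to a simple tree on its vertex set. -/
def IsTreeGraph (G : Multigraph) : Prop :=
  ∃ S : SimpleGraph G.V, S.IsTree ∧ ∃ φ : G.E ≃ S.edgeSet, ∀ e, (φ e : Sym2 G.V) = G.ends e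

/-- The cycle on `n + 3` vertices. -/
def cycleGraph (n : ℕ) : Multigraph where
  V := Fin (n + 3)
  E := Fin (n + 3)
  finV := inferInstance
  finE := inferInstance
  ends := fun i => s(i, i + 1)
  no_loops := by
    intro i hd
    rw [Sym2.mk_isDiag_iff] at hd
    have h1 : (i : Fin (n + 3)) + 0 = i + 1 := by simpa using hd
    have h01 : (0 : Fin (n + 3)) = 1 := add_left_cancel h1
    have := congrArg Fin.val h01
    simp [Fin.val_one] at this

/-- A matching in a multigraph: a set of pairwise vertex-disjoint edges. -/
def IsMatching (G : Multigraph) (M : Set G.E) : Prop :=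
  ∀ e ∈ M, ∀ e' ∈ M, e ≠ e' → ∀ v : G.V, v ∈ G.ends e → v ∉ G.ends e'

end Multigraph

section TPLAux

open Multigraph SimpleGraph

variable {τ : Type} [Finite τ] {tree : SimpleGraph τ}

/-- Deleting an edge of a tree disconnects its endpoints. -/
lemma TPL.not_reach_del (ht : tree.IsTree) {u v : τ} (h : tree.Adj u v) :
    ¬ (tree.deleteEdges {s(u, v)}).Reachable u v :=
  (SimpleGraph.isBridge_iff.mp
    ((SimpleGraph.isAcyclic_iff_forall_adj_isBridge.mp ht.IsAcyclic) h))

/-- A walk in a subgraph of `tree` avoiding `v` transfers to `tree` minus an edge at `v`. -/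
lemma TPL.reach_del_of_avoid {G : SimpleGraph τ} (hle : G ≤ tree) {u v a b : τ}
    (p : G.Walk a b) (hv : v ∉ p.support) :
    (tree.deleteEdges {s(u, v)}).Reachable a b := by
  induction p with
  | nil => exact Reachable.refl _
  | @cons x y z h q ih =>
    simp only [Walk.support_cons, List.mem_cons] at hv
    push_neg at hv
    have hy : y ≠ v := fun hy => hv.2 (hy ▸ q.start_mem_support)
    refine (SimpleGraph.Adj.reachable ?_).trans (ih hv.2)
    rw [SimpleGraph.deleteEdges_adj]
    refine ⟨hle h, ?_⟩
    simp only [Set.mem_singleton_iff]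
    intro heq
    have hm : v ∈ s(x, y) := by rw [heq]; exact Sym2.mem_mk_right u v
    rcases Sym2.mem_iff.mp hm with h' | h'
    · exact hv.1 h'
    · exact hy h'.symm

/-- Every vertex is on one of the two sides of a deleted tree edge. -/
lemma TPL.cover (ht : tree.IsTree) (u v w : τ) :
    (tree.deleteEdges {s(u, v)}).Reachable u w ∨
      (tree.deleteEdges {s(u, v)}).Reachable v w := by
  obtain ⟨p⟩ := ht.isConnected.preconnected u w
  have H : ∀ (a : τ), tree.Walk a w →
      ((tree.deleteEdges {s(u, v)}).Reachable u a ∨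
        (tree.deleteEdges {s(u, v)}).Reachable v a) →
      ((tree.deleteEdges {s(u, v)}).Reachable u w ∨
        (tree.deleteEdges {s(u, v)}).Reachable v w) := by
    clear p
    intro a p
    induction p with
    | nil => exact id
    | @cons x y z h q ih =>
      intro hx
      apply ih
      by_cases he : s(x, y) = s(u, v)
      · rw [Sym2.eq_iff] at he
        rcases he with ⟨-, rfl⟩ | ⟨-, rfl⟩
        · exact Or.inr (Reachable.refl _)
        · exact Or.inl (Reachable.refl _)
      · have hadj : (tree.deleteEdges {s(u, v)}).Adj x y := by
          rw [SimpleGraph.deleteEdges_adj]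
          exact ⟨h, by simpa using he⟩
        rcases hx with h1 | h1
        · exact Or.inl (h1.trans hadj.reachable)
        · exact Or.inr (h1.trans hadj.reachable)
  exact H u p (Or.inl (Reachable.refl u))

/-- The two sides of a tree edge partition `X`. -/
lemma TPL.side_sum (ht : tree.IsTree) {u v : τ} (h : tree.Adj u v) (X : Set τ) :
    (X ∩ {s | (tree.deleteEdges {s(u, v)}).Reachable u s}).ncard +
      (X ∩ {s | (tree.deleteEdges {s(u, v)}).Reachable v s}).ncard = X.ncard := by
  classical
  have hdisj : Disjoint (X ∩ {s | (tree.deleteEdges {s(u, v)}).Reachable u s})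
      (X ∩ {s | (tree.deleteEdges {s(u, v)}).Reachable v s}) := by
    rw [Set.disjoint_left]
    rintro s ⟨-, hsu⟩ ⟨-, hsv⟩
    exact TPL.not_reach_del ht h (hsu.trans hsv.symm)
  rw [← Set.ncard_union_eq hdisj (Set.toFinite _) (Set.toFinite _),
    ← Set.inter_union_distrib_left]
  congr 1
  rw [Set.inter_eq_self_of_subset_left]
  intro s _
  exact TPL.cover ht u v s

/-- Nested sides: the far side of the next edge is inside the far side of the previous one. -/
lemma TPL.side_subset (ht : tree.IsTree) {u v z : τ} (huv : tree.Adj u v)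
    (hvz : tree.Adj v z) (hzu : z ≠ u) :
    {s | (tree.deleteEdges {s(v, z)}).Reachable z s} ⊆
      {s | (tree.deleteEdges {s(u, v)}).Reachable v s} := by
  classical
  intro s hs
  obtain ⟨p⟩ := hs
  by_cases hvp : v ∈ p.support
  · exact absurd (Reachable.symm ⟨p.takeUntil v hvp⟩) (TPL.not_reach_del ht hvz)
  · have h1 : (tree.deleteEdges {s(u, v)}).Reachable z s :=
      TPL.reach_del_of_avoid (SimpleGraph.deleteEdges_le _) p hvp
    have hadj : (tree.deleteEdges {s(u, v)}).Adj v z := by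
      rw [SimpleGraph.deleteEdges_adj]
      refine ⟨hvz, ?_⟩
      simp only [Set.mem_singleton_iff, Sym2.eq_iff]
      push_neg
      exact ⟨fun h' => absurd h'.symm huv.ne, fun _ h' => hzu h'⟩
    exact hadj.reachable.trans h1

/-- The weight of the `v`-side of the tree edge `uv`. -/
noncomputable def TPL.sideW (tree : SimpleGraph τ) (X : Set τ) (u v : τ) : ℕ :=
  (X ∩ {s | (tree.deleteEdges {s(u, v)}).Reachable v s}).ncard

lemma TPL.sideW_eq (tree : SimpleGraph τ) (X : Set τ) (u v : τ) :
    TPL.sideW tree X v u =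
      (X ∩ {s | (tree.deleteEdges {s(u, v)}).Reachable u s}).ncard := by
  unfold TPL.sideW
  rw [Sym2.eq_swap]

lemma TPL.sideW_sum (ht : tree.IsTree) {u v : τ} (h : tree.Adj u v) (X : Set τ) :
    TPL.sideW tree X u v + TPL.sideW tree X v u = X.ncard := by
  rw [TPL.sideW_eq tree X u v, Nat.add_comm]
  exact TPL.side_sum ht h X

/-- Sink existence: if every tree edge has a unique "big" side, some vertex has all
incident edges pointing at it. -/
lemma TPL.exists_sink (ht : tree.IsTree) (hcard : 2 ≤ Nat.card τ) (X : Set τ) (r : ℕ)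
    (hbig : ∀ u v, tree.Adj u v → r ≤ TPL.sideW tree X u v ∨ r ≤ TPL.sideW tree X v u)
    (hsmall : ∀ u v, tree.Adj u v → r ≤ TPL.sideW tree X u v → TPL.sideW tree X v u < r) :
    ∃ v : τ, ∀ z, tree.Adj v z → TPL.sideW tree X v z < r := by
  classical
  haveI : Nontrivial τ := Finite.one_lt_card_iff_nontrivial.mp hcard
  obtain ⟨x, y, hxy⟩ := exists_pair_ne τ
  obtain ⟨w⟩ := ht.isConnected.preconnected x y
  obtain ⟨u, hadj, q, -⟩ := SimpleGraph.Walk.exists_eq_cons_of_ne hxy w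
  suffices H : ∀ (n : ℕ) (u v : τ), tree.Adj u v → r ≤ TPL.sideW tree X u v →
      {s | (tree.deleteEdges {s(u, v)}).Reachable v s}.ncard ≤ n →
      ∃ v : τ, ∀ z, tree.Adj v z → TPL.sideW tree X v z < r by
    rcases hbig x u hadj with h | h
    · exact H _ x u hadj h le_rfl
    · exact H _ u x hadj.symm h le_rfl
  intro n
  induction n using Nat.strong_induction_on with
  | _ n ih =>
    intro u v huv hw hn
    by_cases hs : ∀ z, tree.Adj v z → TPL.sideW tree X v z < r
    · exact ⟨v, hs⟩
    push_neg at hs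
    obtain ⟨z, hvz, hz⟩ := hs
    have hzu : z ≠ u := by
      rintro rfl
      have := hsmall _ _ huv hw
      omega
    have hss : {s | (tree.deleteEdges {s(v, z)}).Reachable z s} ⊂
        {s | (tree.deleteEdges {s(u, v)}).Reachable v s} := by
      refine (TPL.side_subset ht huv hvz hzu).ssubset_of_ne (fun hEq => ?_)
      have hvB : v ∈ {s | (tree.deleteEdges {s(u, v)}).Reachable v s} :=
        Reachable.refl v
      rw [← hEq] at hvB
      exact TPL.not_reach_del ht hvz (Reachable.symm hvB)
    have hlt : {s | (tree.deleteEdges {s(v, z)}).Reachable z s}.ncard < n :=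
      lt_of_lt_of_le (Set.ncard_lt_ncard hss (Set.toFinite _)) hn
    exact ih _ hlt v z hvz hz le_rfl

/-- Every vertex `x ≠ v` is connected, off `v`, to a neighbour of `v`. -/
lemma TPL.exists_nbr (ht : tree.IsTree) {v x : τ} (hvx : x ≠ v) :
    ∃ u, tree.Adj v u ∧ (delAt tree v).Reachable u x := by
  classical
  obtain ⟨w⟩ := ht.isConnected.preconnected v x
  obtain ⟨u, hadj, q, hq⟩ := SimpleGraph.Walk.exists_eq_cons_of_ne (Ne.symm hvx) w.toPath.val
  have hP : (SimpleGraph.Walk.cons hadj q).IsPath := hq ▸ w.toPath.prop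
  rw [SimpleGraph.Walk.cons_isPath_iff] at hP
  exact ⟨u, hadj, Multigraph.reach_delAt tree v q hP.2⟩

lemma TPL.delAt_le_del (tree : SimpleGraph τ) (v u : τ) :
    delAt tree v ≤ tree.deleteEdges {s(v, u)} := by
  rintro a b ⟨hab, ha, hb⟩
  rw [SimpleGraph.deleteEdges_adj]
  refine ⟨hab, ?_⟩
  simp only [Set.mem_singleton_iff]
  intro heq
  have hm : v ∈ s(a, b) := by rw [heq]; exact Sym2.mem_mk_left v u
  rcases Sym2.mem_iff.mp hm with h' | h'
  · exact ha h'.symm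
  · exact hb h'.symm

end TPLAux

open Multigraph in
/-- in a tree with at least two vertices and `|X| ≥ kr`, either some
vertex has at least `k` components of its deletion meeting `X`, or some edge has at
least `r` vertices of `X` in each component of its deletion. -/
theorem tree_partition_lemma (τ : Type) [Finite τ] (tree : SimpleGraph τ)
    (ht : tree.IsTree) (hcard : 2 ≤ Nat.card τ) (X : Set τ) (k r : ℕ)
    (hk : 1 ≤ k) (hr : 1 ≤ r) (hX : k * r ≤ X.ncard) :
    (∃ v : τ, k ≤ {c : (delAt tree v).ConnectedComponent |
        ∃ x ∈ X, x ≠ v ∧ (delAt tree v).connectedComponentMk x = c}.ncard) ∨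
    (∃ u v : τ, tree.Adj u v ∧
      r ≤ (X ∩ {s | (tree.deleteEdges {s(u, v)}).Reachable u s}).ncard ∧
      r ≤ (X ∩ {s | (tree.deleteEdges {s(u, v)}).Reachable v s}).ncard) := by
  classical
  rcases Nat.lt_or_ge k 2 with hk1 | hk2
  · -- k = 1
    have hk1' : k = 1 := by omega
    subst hk1'
    left
    have hXne : X.Nonempty := by
      rw [← Set.ncard_pos (Set.toFinite X)]
      omega
    obtain ⟨x, hx⟩ := hXne
    haveI : Nontrivial τ := Finite.one_lt_card_iff_nontrivial.mp hcard
    obtain ⟨v, hv⟩ := exists_ne x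
    refine ⟨v, ?_⟩
    have hmem : (delAt tree v).connectedComponentMk x ∈
        {c : (delAt tree v).ConnectedComponent |
          ∃ x ∈ X, x ≠ v ∧ (delAt tree v).connectedComponentMk x = c} :=
      ⟨x, hx, Ne.symm hv, rfl⟩
    have hpos := (Set.ncard_pos (Set.toFinite _)).mpr ⟨_, hmem⟩
    omega
  · by_cases hc2 : (∃ u v, tree.Adj u v ∧
        r ≤ (X ∩ {s | (tree.deleteEdges {s(u, v)}).Reachable u s}).ncard ∧
        r ≤ (X ∩ {s | (tree.deleteEdges {s(u, v)}).Reachable v s}).ncard)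
    · exact Or.inr hc2
    left
    push_neg at hc2
    have hsmall : ∀ u v, tree.Adj u v → r ≤ TPL.sideW tree X u v →
        TPL.sideW tree X v u < r := by
      intro u v huv h
      have h1 := hc2 v u huv.symm
      rw [← TPL.sideW_eq tree X v u] at h1
      exact h1 h
    have hbig : ∀ u v, tree.Adj u v →
        r ≤ TPL.sideW tree X u v ∨ r ≤ TPL.sideW tree X v u := by
      intro u v huv
      have hsum := TPL.sideW_sum ht huv X
      have h2r : 2 * r ≤ X.ncard :=
        le_trans (Nat.mul_le_mul_right r hk2) hX
      omega
    obtain ⟨v, hsink⟩ := TPL.exists_sink ht hcard X r hbig hsmall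
    refine ⟨v, ?_⟩
    by_contra hS
    push_neg at hS
    set φ := (delAt tree v).connectedComponentMk with hphi
    set A : Finset τ := (Set.toFinite (X \ {v})).toFinset with hA
    have hfiber : ∀ c ∈ A.image φ, (A.filter (fun x => φ x = c)).card ≤ r - 1 := by
      intro c hc
      obtain ⟨x₀, hx₀A, rfl⟩ := Finset.mem_image.mp hc
      rw [hA, Set.Finite.mem_toFinset, Set.mem_diff, Set.mem_singleton_iff] at hx₀A
      obtain ⟨u₀, hu₀, hreach⟩ := TPL.exists_nbr ht hx₀A.2
      have hsub : ∀ y ∈ A.filter (fun x => φ x = φ x₀),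
          y ∈ X ∩ {s | (tree.deleteEdges {s(v, u₀)}).Reachable u₀ s} := by
        intro y hy
        rw [Finset.mem_filter] at hy
        obtain ⟨hyA, hyc⟩ := hy
        rw [hA, Set.Finite.mem_toFinset, Set.mem_diff, Set.mem_singleton_iff] at hyA
        refine ⟨hyA.1, ?_⟩
        have hxy : (delAt tree v).Reachable x₀ y :=
          (SimpleGraph.ConnectedComponent.eq.mp hyc).symm
        exact ((hreach.trans hxy).mono (TPL.delAt_le_del tree v u₀))
      have hcard' : (A.filter (fun x => φ x = φ x₀)).card ≤
          (X ∩ {s | (tree.deleteEdges {s(v, u₀)}).Reachable u₀ s}).ncard := by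
        rw [← Set.ncard_coe_finset (A.filter (fun x => φ x = φ x₀))]
        exact Set.ncard_le_ncard (fun y hy => hsub y (Finset.mem_coe.mp hy))
          (Set.toFinite _)
      have hsw := hsink u₀ hu₀
      unfold TPL.sideW at hsw
      omega
    have hAcard := Finset.card_le_mul_card_image A (r - 1) hfiber
    have himg : ((A.image φ : Finset _) : Set _) =
        {c : (delAt tree v).ConnectedComponent |
          ∃ x ∈ X, x ≠ v ∧ (delAt tree v).connectedComponentMk x = c} := by
      ext c
      simp only [Finset.coe_image, hA, Set.Finite.coe_toFinset, Set.mem_image,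
        Set.mem_diff, Set.mem_singleton_iff, Set.mem_setOf_eq, hphi]
      constructor
      · rintro ⟨x, ⟨hx1, hx2⟩, rfl⟩
        exact ⟨x, hx1, hx2, rfl⟩
      · rintro ⟨x, hx1, hx2, rfl⟩
        exact ⟨x, ⟨hx1, hx2⟩, rfl⟩
    have himgcard : (A.image φ).card < k := by
      rw [← Set.ncard_coe_finset, himg]
      exact hS
    have hAX : X.ncard ≤ A.card + 1 := by
      rw [hA, ← Set.ncard_coe_finset, Set.Finite.coe_toFinset]
      calc X.ncard ≤ (insert v (X \ {v})).ncard := by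
            refine Set.ncard_le_ncard (fun x hx => ?_) (Set.toFinite _)
            rcases eq_or_ne x v with h | h
            · rw [h]; exact Set.mem_insert _ _
            · exact Set.mem_insert_of_mem _ ⟨hx, h⟩
        _ ≤ (X \ {v}).ncard + 1 := Set.ncard_insert_le _ _
    obtain ⟨r', rfl⟩ : ∃ r', r = r' + 1 := ⟨r - 1, by omega⟩
    obtain ⟨k', rfl⟩ : ∃ k', k = k' + 2 := ⟨k - 2, by omega⟩
    have h1 : (k' + 2) * (r' + 1) ≤ r' * (A.image φ).card + 1 := by
      have : r' + 1 - 1 = r' := by omega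
      rw [this] at hAcard
      omega
    have h2' : r' * (A.image φ).card ≤ r' * (k' + 1) :=
      Nat.mul_le_mul_left _ (by omega)
    nlinarith [h1, h2']
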